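/- Let f : (0,∞) → ℝ be Lebesgue-measurable and suppose f(qx) = f(x) for every positive rational q and almost every x > 0. Then f is constant almost everywhere on (0,∞). -/

import Mathlib

open MeasureTheory Filter Set Topology
open scoped ENNReal symmDiff

/-- A measurable set that is a.e. invariant under a dense set of translations is null or
conull. -/
lemma zero_one_law {S : Set ℝ} (hS : MeasurableSet S) {D : Set ℝ} (hD : Dense D)
    (hinv : ∀ t ∈ D, ∀ᵐ x : ℝ, (x + t ∈ S ↔ x ∈ S)) :
    volume S = 0 ∨ volume Sᶜ = 0 := by
  rcases eq_or_ne (volume Sᶜ) 0 with h | h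
  · exact Or.inr h
  left
  -- find a positive finite measure piece of Sᶜ
  have hU : Sᶜ = ⋃ n : ℕ, Sᶜ ∩ Metric.ball 0 n := by
    ext x
    simp only [mem_iUnion, mem_inter_iff, Metric.mem_ball]
    constructor
    · intro hx
      obtain ⟨n, hn⟩ := exists_nat_gt (dist x 0)
      exact ⟨n, hx, hn⟩
    · rintro ⟨n, hn, -⟩; exact hn
  have : ∃ n : ℕ, volume (Sᶜ ∩ Metric.ball 0 n) ≠ 0 := by
    by_contra hc
    push_neg at hc
    exact h (by rw [hU]; exact measure_iUnion_null hc)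
  obtain ⟨n, hApos⟩ := this
  set A : Set ℝ := Sᶜ ∩ Metric.ball 0 n with hAdef
  have hA : MeasurableSet A := hS.compl.inter Metric.isOpen_ball.measurableSet
  have hAfin : volume A ≠ ∞ :=
    (lt_of_le_of_lt (measure_mono inter_subset_right) measure_ball_lt_top).ne
  set F : ℝ → ℝ≥0∞ := fun t => volume (S ∩ (fun x => x - t) ⁻¹' A) with hFdef
  -- F is zero on D
  have hF0 : ∀ t ∈ D, F t = 0 := by
    intro t ht
    have hmp := measurePreserving_add_right (volume : Measure ℝ) t
    have key : F t = volume ((fun x => x + t) ⁻¹' S ∩ A) := by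
      have := hmp.measure_preimage
        ((hS.inter ((hA.preimage (measurable_sub_const t)))).nullMeasurableSet)
      rw [hFdef]
      simp only at this ⊢
      rw [← this]
      congr 1
      ext x
      simp [add_sub_cancel_right]
    rw [key]
    have hae : ((fun x => x + t) ⁻¹' S ∩ A : Set ℝ) =ᵐ[volume] (S ∩ A : Set ℝ) := by
      rw [eventuallyEq_set]
      filter_upwards [hinv t ht] with x hx
      simp only [mem_inter_iff, mem_preimage]
      exact and_congr_left fun _ => hx
    rw [measure_congr hae]
    have : S ∩ A = ∅ := by
      rw [hAdef, ← inter_assoc]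
      simp
    simp [this]
  -- F is continuous
  have hFcont : Continuous F := by
    rw [continuous_iff_continuousAt]
    intro t₀
    set Φ : C(ℝ, C(ℝ, ℝ)) := ContinuousMap.curry ⟨fun p : ℝ × ℝ => p.2 - p.1, by fun_prop⟩ with hΦ
    have hmp : ∀ t : ℝ, MeasurePreserving (fun x : ℝ => x - t) volume volume :=
      fun t => measurePreserving_sub_right volume t
    have hsd : Tendsto (fun t => volume (((Φ t) ⁻¹' A) ∆ ((Φ t₀) ⁻¹' A))) (𝓝 t₀) (𝓝 0) := by
      refine tendsto_measure_symmDiff_preimage_nhds_zero (Φ.continuous.tendsto t₀) ?_ ?_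
        hA.nullMeasurableSet hAfin
      · exact Eventually.of_forall fun t => hmp t
      · exact hmp t₀
    have hΦapp : ∀ t x : ℝ, Φ t x = x - t := fun t x => rfl
    have hbound : ∀ t₁ t₂ : ℝ, F t₁ ≤ F t₂ +
        volume (((fun x : ℝ => x - t₁) ⁻¹' A) ∆ ((fun x : ℝ => x - t₂) ⁻¹' A)) := by
      intro t₁ t₂
      refine le_trans (measure_mono ?_) (measure_union_le _ _)
      intro x hx
      by_cases hx2 : x - t₂ ∈ A
      · exact Or.inl ⟨hx.1, hx2⟩
      · exact Or.inr (Or.inl ⟨hx.2, hx2⟩)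
    have hFfin : F t₀ ≠ ∞ := by
      refine (lt_of_le_of_lt (measure_mono inter_subset_right) ?_).ne
      rw [(hmp t₀).measure_preimage hA.nullMeasurableSet]
      exact hAfin.lt_top
    have hlow : Tendsto (fun t => F t₀ - volume (((Φ t) ⁻¹' A) ∆ ((Φ t₀) ⁻¹' A))) (𝓝 t₀)
        (𝓝 (F t₀)) := by
      have := ENNReal.Tendsto.sub (tendsto_const_nhds (x := F t₀)) hsd (Or.inl hFfin)
      simpa using this
    have hhigh : Tendsto (fun t => F t₀ + volume (((Φ t) ⁻¹' A) ∆ ((Φ t₀) ⁻¹' A))) (𝓝 t₀)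
        (𝓝 (F t₀)) := by
      have := Tendsto.add (tendsto_const_nhds (x := F t₀)) hsd
      simpa using this
    refine tendsto_of_tendsto_of_tendsto_of_le_of_le hlow hhigh ?_ ?_
    · intro t
      rw [tsub_le_iff_right]
      have := hbound t₀ t
      rwa [symmDiff_comm] at this
    · intro t
      have := hbound t t₀
      exact this
  -- hence F is identically zero
  have hFzero : ∀ t, F t = 0 := by
    have : F = fun _ => (0 : ℝ≥0∞) :=
      Continuous.ext_on hD hFcont continuous_const hF0
    intro t; rw [this]
  -- Fubini computation
  have hkey : ∫⁻ t, F t ∂volume = volume S * volume A := by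
    have h1 : ∀ t : ℝ, F t = ∫⁻ x, S.indicator 1 x * A.indicator 1 (x - t) ∂volume := by
      intro t
      rw [hFdef]
      simp only
      rw [← lintegral_indicator_one (hS.inter (hA.preimage (measurable_sub_const t)))]
      congr 1
      funext x
      by_cases hx1 : x ∈ S <;> by_cases hx2 : x - t ∈ A <;>
        simp [Set.indicator_apply, hx1, hx2, Set.mem_inter_iff]
    calc ∫⁻ t, F t ∂volume
        = ∫⁻ t, ∫⁻ x, S.indicator 1 x * A.indicator 1 (x - t) ∂volume ∂volume := by
          simp_rw [h1]
      _ = ∫⁻ x, ∫⁻ t, S.indicator 1 x * A.indicator 1 (x - t) ∂volume ∂volume := by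
          apply lintegral_lintegral_swap
          apply Measurable.aemeasurable
          apply Measurable.mul
          · exact (measurable_one.indicator hS).comp measurable_snd
          · exact (measurable_one.indicator hA).comp (measurable_snd.sub measurable_fst)
      _ = ∫⁻ x, S.indicator 1 x * volume A ∂volume := by
          congr 1
          funext x
          rw [lintegral_const_mul']
          · congr 1
            have hmp : MeasurePreserving (fun t : ℝ => x - t) volume volume :=
              Measure.measurePreserving_sub_left volume x
            rw [hmp.lintegral_comp (measurable_one.indicator hA)]
            exact lintegral_indicator_one hA
          · exact (le_trans (Set.indicator_le_self _ _ x) (by norm_num)).trans_lt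
              ENNReal.one_lt_top |>.ne
      _ = volume S * volume A := by
          rw [lintegral_mul_const' _ _ hAfin, lintegral_indicator_one hS]
  have : volume S * volume A = 0 := by
    rw [← hkey]
    simp [hFzero]
  rcases mul_eq_zero.mp this with h' | h'
  · exact h'
  · exact absurd h' hApos

lemma dense_log_rat : Dense {t : ℝ | ∃ q : ℚ, 0 < q ∧ Real.log q = t} := by
  intro x
  rw [Metric.mem_closure_iff]
  intro ε hε
  have hx : (0 : ℝ) < Real.exp x := Real.exp_pos x
  have hcont : ContinuousAt Real.log (Real.exp x) := Real.continuousAt_log hx.ne'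
  rw [Metric.continuousAt_iff] at hcont
  obtain ⟨δ, hδ, hof⟩ := hcont ε hε
  obtain ⟨q, hq1, hq2⟩ := exists_rat_btwn (lt_add_of_pos_right (Real.exp x) hδ)
  have hq0 : (0 : ℚ) < q := by
    have : (0 : ℝ) < (q : ℝ) := hx.trans hq1
    exact_mod_cast this
  refine ⟨Real.log q, ⟨q, hq0, rfl⟩, ?_⟩
  have hd : dist (q : ℝ) (Real.exp x) < δ := by
    rw [Real.dist_eq, abs_of_pos (by linarith)]
    linarith
  have := hof hd
  rw [Real.log_exp] at this
  rw [dist_comm]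
  exact this

theorem stmt_13 (f : ℝ → ℝ) (hf : Measurable f)
    (hinv : ∀ q : ℚ, 0 < q → ∀ᵐ x ∂(volume.restrict (Ioi (0 : ℝ))), f ((q : ℝ) * x) = f x) :
    ∃ c : ℝ, ∀ᵐ x ∂(volume.restrict (Ioi (0 : ℝ))), f x = c := by
  set g : ℝ → ℝ := fun t => f (Real.exp t) with hgdef
  have hg : Measurable g := hf.comp Real.measurable_exp
  set D : Set ℝ := {t : ℝ | ∃ q : ℚ, 0 < q ∧ Real.log q = t} with hDdef
  -- transfer the invariance to g
  have hginv : ∀ t ∈ D, ∀ᵐ x : ℝ, g (x + t) = g x := by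
    rintro t ⟨q, hq, rfl⟩
    have h := (ae_restrict_iff' measurableSet_Ioi).mp (hinv q hq)
    rw [ae_iff] at h ⊢
    set N : Set ℝ := {x | ¬(x ∈ Ioi (0:ℝ) → f ((q:ℝ) * x) = f x)} with hNdef
    have hN : volume N = 0 := h
    have hNsub : N ⊆ Ioi (0 : ℝ) := by
      intro x hx
      by_contra hx0
      exact hx fun h' => absurd h' hx0
    have hsub : {x : ℝ | ¬ g (x + Real.log q) = g x} ⊆ Real.log '' N := by
      intro x hx
      have hqR : (0 : ℝ) < (q : ℝ) := by exact_mod_cast hq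
      have hx' : Real.exp x ∈ N := by
        intro hcon
        apply hx
        have := hcon (mem_Ioi.mpr (Real.exp_pos x))
        rw [hgdef]
        simp only
        rw [Real.exp_add, Real.exp_log hqR, mul_comm]
        exact this
      exact ⟨Real.exp x, hx', Real.log_exp x⟩
    refine measure_mono_null hsub ?_
    apply addHaar_image_eq_zero_of_differentiableOn_of_addHaar_eq_zero (μ := volume) _ hN
    intro x hx
    exact (Real.differentiableAt_log (ne_of_gt (mem_Ioi.mp (hNsub hx)))).differentiableWithinAt
  -- zero-one law on level sets
  have hzo : ∀ r : ℚ, volume {t : ℝ | g t < r} = 0 ∨ volume {t : ℝ | g t < r}ᶜ = 0 := by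
    intro r
    refine zero_one_law (measurableSet_lt hg measurable_const) dense_log_rat ?_
    intro t ht
    filter_upwards [hginv t ht] with x hx
    simp only [mem_setOf_eq, hx]
  set R : Set ℚ := {r : ℚ | volume {t : ℝ | g t < r}ᶜ = 0} with hRdef
  have hvol_univ : volume (univ : Set ℝ) ≠ 0 := by simp
  have hRne : R.Nonempty := by
    by_contra hc
    rw [not_nonempty_iff_eq_empty] at hc
    have hall : ∀ r : ℚ, volume {t : ℝ | g t < r} = 0 := by
      intro r
      rcases hzo r with h' | h'
      · exact h'
      · exact absurd (show r ∈ R from h') (by rw [hc]; exact notMem_empty r)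
    have : volume (⋃ r : ℚ, {t : ℝ | g t < r}) = 0 := measure_iUnion_null hall
    have huniv : (⋃ r : ℚ, {t : ℝ | g t < r}) = univ := by
      ext x
      simp only [mem_iUnion, mem_setOf_eq, mem_univ, iff_true]
      obtain ⟨r, hr⟩ := exists_rat_gt (g x)
      exact ⟨r, hr⟩
    rw [huniv] at this
    exact hvol_univ this
  have hr₀ : ∃ r₀ : ℚ, volume {t : ℝ | g t < r₀}ᶜ ≠ 0 := by
    by_contra hc
    push_neg at hc
    have : volume (⋃ r : ℚ, {t : ℝ | g t < r}ᶜ) = 0 := measure_iUnion_null hc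
    have huniv : (⋃ r : ℚ, {t : ℝ | g t < r}ᶜ) = univ := by
      ext x
      simp only [mem_iUnion, mem_compl_iff, mem_setOf_eq, mem_univ, iff_true, not_lt]
      obtain ⟨r, hr⟩ := exists_rat_lt (g x)
      exact ⟨r, hr.le⟩
    rw [huniv] at this
    exact hvol_univ this
  obtain ⟨r₀, hr₀⟩ := hr₀
  have hr₀0 : volume {t : ℝ | g t < r₀} = 0 := (hzo r₀).resolve_right hr₀
  set Rc : Set ℝ := (fun r : ℚ => (r : ℝ)) '' R with hRcdef
  have hRcne : Rc.Nonempty := hRne.image _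
  have hRcbdd : BddBelow Rc := by
    refine ⟨(r₀ : ℝ), ?_⟩
    rintro x ⟨r, hr, rfl⟩
    by_contra hlt
    push_neg at hlt
    have hrr : r < r₀ := by exact_mod_cast hlt
    have hsub : {t : ℝ | g t < r} ⊆ {t : ℝ | g t < r₀} := by
      intro t ht
      have hrr' : (r : ℝ) < (r₀ : ℝ) := by exact_mod_cast hrr
      exact ht.trans hrr'
    have h0 : volume {t : ℝ | g t < r} = 0 := measure_mono_null hsub hr₀0
    have : volume (univ : Set ℝ) = 0 := by
      have := measure_union_le (μ := volume) {t : ℝ | g t < r} {t : ℝ | g t < r}ᶜ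
      rw [union_compl_self, h0, hr] at this
      simp only [add_zero] at this
      exact le_antisymm this zero_le
    exact hvol_univ this
  set c : ℝ := sInf Rc with hcdef
  refine ⟨c, ?_⟩
  -- a.e. on ℝ, g = c
  have h1 : ∀ᵐ x : ℝ, g x ≤ c := by
    have hae : ∀ᵐ x : ℝ, ∀ r : ℚ, c < r → g x < r := by
      rw [ae_all_iff]
      intro r
      by_cases hcr : c < (r : ℝ)
      · obtain ⟨y, hy, hylt⟩ := exists_lt_of_csInf_lt hRcne hcr
        obtain ⟨r', hr', rfl⟩ := hy
        have hsub : {t : ℝ | g t < r}ᶜ ⊆ {t : ℝ | g t < r'}ᶜ := by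
          intro t ht
          simp only [mem_compl_iff, mem_setOf_eq, not_lt] at ht ⊢
          exact le_trans hylt.le ht
        have h0 : volume {t : ℝ | g t < r}ᶜ = 0 := measure_mono_null hsub hr'
        rw [ae_iff]
        convert h0 using 2
        ext t
        simp [hcr]
      · filter_upwards with x hx
        exact absurd hx hcr
    filter_upwards [hae] with x hx
    by_contra hgt
    push_neg at hgt
    obtain ⟨r, hr1, hr2⟩ := exists_rat_btwn hgt
    exact absurd (hx r hr1) (not_lt.mpr hr2.le)
  have h2 : ∀ᵐ x : ℝ, c ≤ g x := by
    have hae : ∀ᵐ x : ℝ, ∀ r : ℚ, (r : ℝ) < c → (r : ℝ) ≤ g x := by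
      rw [ae_all_iff]
      intro r
      by_cases hcr : (r : ℝ) < c
      · have hrR : r ∉ R := by
          intro hmem
          exact absurd (csInf_le hRcbdd ⟨r, hmem, rfl⟩) (not_le.mpr hcr)
        have h0 : volume {t : ℝ | g t < r} = 0 := (hzo r).resolve_right hrR
        rw [ae_iff]
        convert h0 using 2
        ext t
        simp [hcr]
      · filter_upwards with x hx
        exact absurd hx hcr
    filter_upwards [hae] with x hx
    by_contra hgt
    push_neg at hgt
    obtain ⟨r, hr1, hr2⟩ := exists_rat_btwn hgt
    exact absurd (hx r hr2) (not_le.mpr hr1)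
  have hgc : ∀ᵐ x : ℝ, g x = c := by
    filter_upwards [h1, h2] with x hx1 hx2
    exact le_antisymm hx1 hx2
  -- transfer back to f
  rw [ae_restrict_iff' measurableSet_Ioi, ae_iff]
  rw [ae_iff] at hgc
  set M : Set ℝ := {x : ℝ | ¬ g x = c} with hMdef
  have hsub : {x : ℝ | ¬(x ∈ Ioi (0:ℝ) → f x = c)} ⊆ Real.exp '' M := by
    intro x hx
    rw [Set.mem_setOf_eq, Classical.not_imp] at hx
    obtain ⟨hx1, hx2⟩ := hx
    refine ⟨Real.log x, ?_, Real.exp_log (mem_Ioi.mp hx1)⟩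
    rw [hMdef]
    simp only [mem_setOf_eq, hgdef]
    rw [Real.exp_log (mem_Ioi.mp hx1)]
    exact hx2
  refine measure_mono_null hsub ?_
  apply addHaar_image_eq_zero_of_differentiableOn_of_addHaar_eq_zero (μ := volume) _ hgc
  exact fun x _ => (Real.differentiable_exp x).differentiableWithinAt
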